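/- Let L and L' be finite-dimensional real Lie algebras and let φ : ℝ → (L' ≃ₗ[ℝ] L) define a contraction of L onto L'. Let B be a symmetric invariant bilinear form on L, let c : ℝ → ℝ be a scalar function, and let B' be a bilinear form on L' such that for all x, y ∈ L' the function t ↦ c(t)·B(φ t x, φ t y) converges to B'(x, y) as t → +∞. If B' is non-degenerate, then B is non-degenerate; in particular L is quasi-classical. -/

import Mathlib

open Filter

/-- Let `φ : ℝ → (L' ≃ₗ[ℝ] L)` define a contraction of the
finite-dimensional real Lie algebra `L` onto the finite-dimensional real Lie algebra `L'`
(convergence in the canonical topology of `L'` being expressed, equivalently, through all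
linear functionals).  Let `B` be a symmetric invariant bilinear form on `L`, `c : ℝ → ℝ` a
scalar function, and `B'` a bilinear form on `L'` such that `c(t)·B(φ t x, φ t y) → B'(x,y)` as
`t → +∞` for all `x, y`.  If `B'` is non-degenerate then `B` is non-degenerate; in particular
`L` is quasi-classical. -/
theorem contracting_algebra_quasiClassical_of_limit_nondegenerate
    (L L' : Type*) [LieRing L] [LieAlgebra ℝ L] [FiniteDimensional ℝ L]
    [LieRing L'] [LieAlgebra ℝ L'] [FiniteDimensional ℝ L']
    (φ : ℝ → (L' ≃ₗ[ℝ] L))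
    (hcontr : ∀ x y : L', ∀ f : L' →ₗ[ℝ] ℝ,
      Tendsto (fun t => f ((φ t).symm ⁅φ t x, φ t y⁆)) atTop (nhds (f ⁅x, y⁆)))
    (B : L →ₗ[ℝ] L →ₗ[ℝ] ℝ)
    (hsymm : ∀ x y, B x y = B y x)
    (hinv : ∀ x y z, B ⁅x, y⁆ z = B x ⁅y, z⁆)
    (c : ℝ → ℝ) (B' : L' →ₗ[ℝ] L' →ₗ[ℝ] ℝ)
    (hlim : ∀ x y : L', Tendsto (fun t => c t * B (φ t x) (φ t y)) atTop (nhds (B' x y)))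
    (hB' : ∀ x, (∀ y, B' x y = 0) → x = 0) :
    (∀ x, (∀ y, B x y = 0) → x = 0) ∧
    ∃ C : L →ₗ[ℝ] L →ₗ[ℝ] ℝ,
      (∀ x y, C x y = C y x) ∧
      (∀ x y z, C ⁅x, y⁆ z = C x ⁅y, z⁆) ∧
      (∀ x, (∀ y, C x y = 0) → x = 0) := by
  classical
  have hBnd : ∀ x : L, (∀ y, B x y = 0) → x = 0 := by
    -- choose a basis of L'
    let n := Module.finrank ℝ L'
    let b : Module.Basis (Fin n) ℝ L' := Module.finBasis ℝ L'
    -- Gram matrix of B'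
    have hB'nd : LinearMap.BilinForm.Nondegenerate B' :=
      ⟨fun x h => hB' x h, (LinearMap.separatingRight_iff_det_ne_zero b).mpr
        ((LinearMap.separatingLeft_iff_det_ne_zero b).mp fun x h => hB' x h)⟩
    have hdet' : (LinearMap.BilinForm.toMatrix b B').det ≠ 0 :=
      ((LinearMap.BilinForm.nondegenerate_iff_det_ne_zero b).mp hB'nd)
    -- Gram matrices of the scaled pulled-back forms
    set G : ℝ → Matrix (Fin n) (Fin n) ℝ :=
      fun t => Matrix.of fun i j => c t * B (φ t (b i)) (φ t (b j)) with hG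
    have htendG : Tendsto G atTop (nhds (LinearMap.BilinForm.toMatrix b B')) := by
      refine tendsto_pi_nhds.mpr ?_
      intro i
      rw [tendsto_pi_nhds]
      intro j
      simpa [hG, LinearMap.BilinForm.toMatrix_apply] using hlim (b i) (b j)
    have htendDet : Tendsto (fun t => (G t).det) atTop
        (nhds (LinearMap.BilinForm.toMatrix b B').det) :=
      ((continuous_id.matrix_det).tendsto _).comp htendG
    have hev : ∀ᶠ t in atTop, (G t).det ≠ 0 :=
      htendDet (isOpen_ne.mem_nhds hdet')
    obtain ⟨t₀, ht₀⟩ := hev.exists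
    -- the Gram matrix of the pulled-back (unscaled) form at t₀ has nonzero det
    set Bt : LinearMap.BilinForm ℝ L' := B.compl₁₂ (φ t₀).toLinearMap (φ t₀).toLinearMap with hBt
    have hGsmul : G t₀ = c t₀ • LinearMap.BilinForm.toMatrix b Bt := by
      ext i j
      simp [hG, hBt, BilinForm.toMatrix_apply, LinearMap.compl₁₂_apply]
    have hdetBt : (LinearMap.BilinForm.toMatrix b Bt).det ≠ 0 := by
      intro h
      apply ht₀
      rw [hGsmul, Matrix.det_smul, h, mul_zero]
    have hBtnd : Bt.Nondegenerate :=
      LinearMap.BilinForm.nondegenerate_of_det_ne_zero _ b hdetBt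
    intro x hx
    have : (φ t₀).symm x = 0 := by
      apply hBtnd.1
      intro y
      simp [hBt, LinearMap.compl₁₂_apply, hx (φ t₀ y)]
    have := congrArg (φ t₀) this
    simpa using this
  exact ⟨hBnd, B, hsymm, hinv, hBnd⟩
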